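/- If S and T are finite multisets of prime numbers such that Σ_{p ∈ S} √p = Σ_{p ∈ T} √p (sums counted with multiplicity), then S = T. -/

import Mathlib

open Real

/-- Membership in a subfield with a square root adjoined. -/
theorem mem_closure_insert_sqrt {F : Subfield ℝ} {r : ℝ} (hr2 : r * r ∈ F) (hr : r ∉ F)
    {x : ℝ} (hx : x ∈ Subfield.closure (insert r (F : Set ℝ))) :
    ∃ a ∈ F, ∃ b ∈ F, x = a + b * r := by
  let S : Subfield ℝ :=
    { carrier := {x | ∃ a ∈ F, ∃ b ∈ F, x = a + b * r}
      one_mem' := ⟨1, F.one_mem, 0, F.zero_mem, by ring⟩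
      zero_mem' := ⟨0, F.zero_mem, 0, F.zero_mem, by ring⟩
      add_mem' := by
        rintro x y ⟨a, ha, b, hb, rfl⟩ ⟨c, hc, d, hd, rfl⟩
        exact ⟨a + c, F.add_mem ha hc, b + d, F.add_mem hb hd, by ring⟩
      neg_mem' := by
        rintro x ⟨a, ha, b, hb, rfl⟩
        exact ⟨-a, F.neg_mem ha, -b, F.neg_mem hb, by ring⟩
      mul_mem' := by
        rintro x y ⟨a, ha, b, hb, rfl⟩ ⟨c, hc, d, hd, rfl⟩
        refine ⟨a * c + b * d * (r * r), ?_, a * d + b * c, ?_, by ring⟩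
        · exact F.add_mem (F.mul_mem ha hc) (F.mul_mem (F.mul_mem hb hd) hr2)
        · exact F.add_mem (F.mul_mem ha hd) (F.mul_mem hb hc)
      inv_mem' := by
        rintro x ⟨a, ha, b, hb, rfl⟩
        by_cases hx0 : a + b * r = 0
        · rw [hx0]
          exact ⟨0, F.zero_mem, 0, F.zero_mem, by simp⟩
        · have hD : a * a - b * b * (r * r) ≠ 0 := by
            intro hD
            have hb0 : b ≠ 0 := by
              rintro rfl
              have ha0 : a = 0 := by nlinarith
              simp [ha0] at hx0
            have : (a / b - r) * (a / b + r) = 0 := by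
              field_simp
              nlinarith [hD]
            rcases mul_eq_zero.1 this with h1 | h1
            · exact hr (by have : r = a / b := by linarith
                           rw [this]; exact F.div_mem ha hb)
            · exact hr (by have : r = -(a / b) := by linarith
                           rw [this]; exact F.neg_mem (F.div_mem ha hb))
          set D := a * a - b * b * (r * r) with hDdef
          have hDF : D ∈ F := F.sub_mem (F.mul_mem ha ha) (F.mul_mem (F.mul_mem hb hb) hr2)
          refine ⟨a / D, F.div_mem ha hDF, -b / D, F.div_mem (F.neg_mem hb) hDF, ?_⟩
          have : (a + b * r) * (a - b * r) = D := by rw [hDdef]; ring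
          field_simp
          nlinarith [this] }
  have hsub : insert r (F : Set ℝ) ⊆ (S : Set ℝ) := by
    rintro y (rfl | hy)
    · exact ⟨0, F.zero_mem, 1, F.one_mem, by ring⟩
    · exact ⟨y, hy, 0, F.zero_mem, by ring⟩
  exact Subfield.closure_le.2 hsub hx

/-- The subfield of `ℝ` generated by square roots of a finite set of naturals. -/
noncomputable def KK (P : Finset ℕ) : Subfield ℝ :=
  Subfield.closure ((fun p : ℕ => Real.sqrt p) '' ↑P)

theorem sqrt_mem_KK {P : Finset ℕ} {p : ℕ} (hp : p ∈ P) : Real.sqrt p ∈ KK P :=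
  Subfield.subset_closure ⟨p, by simpa using hp, rfl⟩

/-- Key lemma: if `d` is squarefree with a prime factor `q` not in the finite set of
primes `P`, then `√d` is not in the subfield generated by the `√p`, `p ∈ P`. -/
theorem sqrt_not_mem_KK : ∀ P : Finset ℕ, (∀ p ∈ P, Nat.Prime p) →
    ∀ d : ℕ, Squarefree d → ∀ q : ℕ, q.Prime → q ∣ d → q ∉ P →
    Real.sqrt d ∉ KK P := by
  intro P
  induction P using Finset.strongInduction with
  | _ P ih =>
    intro hP d hd q hq hqd hqP hmem
    have hirr : ¬ IsSquare d := by
      rintro ⟨k, rfl⟩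
      have : q ∣ k := hq.dvd_of_dvd_pow (n := 2) (by rwa [sq])
      exact hq.one_lt.ne' (Nat.isUnit_iff.1 (hd q (mul_dvd_mul this this)))
    rcases P.eq_empty_or_nonempty with rfl | ⟨p, hp⟩
    · -- base case: √d would be rational
      rw [KK] at hmem
      simp only [Finset.coe_empty, Set.image_empty] at hmem
      have h2 : Real.sqrt d ∈ (Rat.castHom ℝ).fieldRange :=
        (Subfield.mem_closure.1 hmem) _ (Set.empty_subset _)
      obtain ⟨r, hr⟩ := h2
      exact (irrational_sqrt_natCast_iff.2 hirr) ⟨r, hr⟩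
    · -- inductive step
      set P' := P.erase p with hP'def
      have hss : P' ⊂ P := Finset.erase_ssubset hp
      have hP' : ∀ r ∈ P', Nat.Prime r := fun r hr => hP r (Finset.mem_of_mem_erase hr)
      have ihP' := ih P' hss hP'
      have hpP' : p ∉ P' := Finset.notMem_erase p P
      have hpprime := hP p hp
      have hqP' : q ∉ P' := fun hm => hqP (Finset.mem_of_mem_erase hm)
      have hsp : Real.sqrt p ∉ KK P' :=
        ihP' p hpprime.squarefree p hpprime dvd_rfl hpP'
      have hp2 : Real.sqrt p * Real.sqrt p = (p : ℝ) := Real.mul_self_sqrt (Nat.cast_nonneg p)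
      have hr2 : Real.sqrt p * Real.sqrt p ∈ KK P' := by
        rw [hp2]; exact natCast_mem _ p
      have hPeq : (P : Set ℕ) = insert p (P' : Set ℕ) := by
        conv_lhs => rw [← Finset.insert_erase hp]
        rw [Finset.coe_insert]
      have hmem' : Real.sqrt d ∈ Subfield.closure (insert (Real.sqrt p) ((KK P' : Set ℝ))) := by
        have himg : (fun p : ℕ => Real.sqrt p) '' ↑P
            = insert (Real.sqrt p) ((fun p : ℕ => Real.sqrt p) '' ↑P') := by
          rw [hPeq, Set.image_insert_eq]
        rw [KK, himg] at hmem
        refine Subfield.closure_mono ?_ hmem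
        rintro x (rfl | ⟨y, hy, rfl⟩)
        · exact Set.mem_insert _ _
        · exact Set.mem_insert_of_mem _ (sqrt_mem_KK (by simpa using hy))
      obtain ⟨a, ha, b, hb, hab⟩ := mem_closure_insert_sqrt hr2 hsp hmem'
      have hd2 : Real.sqrt d * Real.sqrt d = (d : ℝ) := Real.mul_self_sqrt (Nat.cast_nonneg d)
      have hspne : Real.sqrt p ≠ 0 :=
        ne_of_gt (Real.sqrt_pos.2 (by exact_mod_cast hpprime.pos))
      by_cases hb0 : b = 0
      · exact ihP' d hd q hq hqd hqP'
          (by rw [hab, hb0, zero_mul, add_zero]; exact ha)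
      by_cases ha0 : a = 0
      · -- √d = b √p
        have hbd : Real.sqrt d = b * Real.sqrt p := by rw [hab, ha0, zero_add]
        by_cases hpd : p ∣ d
        · obtain ⟨d', rfl⟩ := hpd
          have hd' : Squarefree d' := hd.squarefree_of_dvd (dvd_mul_left d' p)
          have hqd' : q ∣ d' := by
            rcases (Nat.Prime.dvd_mul hq).1 hqd with h1 | h1
            · exact absurd ((Nat.prime_dvd_prime_iff_eq hq hpprime).1 h1)
                (fun e => hqP (e ▸ hp))
            · exact h1
          have hsplit : Real.sqrt ((p * d' : ℕ) : ℝ) = Real.sqrt p * Real.sqrt d' := by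
            rw [Nat.cast_mul, Real.sqrt_mul (Nat.cast_nonneg p)]
          have hd'b : Real.sqrt d' = b := by
            apply mul_left_cancel₀ hspne
            rw [← hsplit, hbd]; ring
          exact ihP' d' hd' q hq hqd' hqP' (hd'b ▸ hb)
        · -- p does not divide d : consider √(d*p) = b*p ∈ K'
          have hcop : Nat.Coprime d p := (hpprime.coprime_iff_not_dvd.2 hpd).symm
          have hsf : Squarefree (d * p) :=
            (Nat.squarefree_mul hcop).2 ⟨hd, hpprime.squarefree⟩
          have hsplit : Real.sqrt ((d * p : ℕ) : ℝ) = Real.sqrt d * Real.sqrt p := by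
            rw [Nat.cast_mul, Real.sqrt_mul (Nat.cast_nonneg d)]
          have hval : Real.sqrt ((d * p : ℕ) : ℝ) = b * (p : ℝ) := by
            rw [hsplit, hbd, mul_assoc, hp2]
          exact ihP' (d * p) hsf p hpprime (dvd_mul_left p d) hpP'
            (by rw [hval]; exact Subfield.mul_mem _ hb (natCast_mem _ p))
      · -- a ≠ 0, b ≠ 0 : solve for √p
        have h1 : (a + b * Real.sqrt p) * (a + b * Real.sqrt p) = (d : ℝ) := by
          rw [← hab]; exact hd2
        have hsq : (d : ℝ) = a * a + 2 * a * b * Real.sqrt p + b * b * (p : ℝ) := by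
          linear_combination (-1 : ℝ) * h1 + b * b * hp2
        have ht : Real.sqrt p = ((d : ℝ) - a * a - b * b * (p : ℝ)) / (2 * a * b) := by
          rw [eq_div_iff (by simp [ha0, hb0])]
          linarith [hsq]
        apply hsp
        rw [ht]
        have h2m : (2 : ℝ) ∈ KK P' := by
          have := natCast_mem (KK P') 2
          push_cast at this
          exact this
        exact Subfield.div_mem _
          (Subfield.sub_mem _
            (Subfield.sub_mem _ (natCast_mem _ d) (Subfield.mul_mem _ ha ha))
            (Subfield.mul_mem _ (Subfield.mul_mem _ hb hb) (natCast_mem _ p)))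
          (Subfield.mul_mem _ (Subfield.mul_mem _ h2m ha) hb)

/-- Square roots of distinct primes are linearly independent over ℤ. -/
theorem sqrt_primes_linIndep (P : Finset ℕ) (hP : ∀ p ∈ P, Nat.Prime p) (c : ℕ → ℤ)
    (h : ∑ p ∈ P, (c p : ℝ) * Real.sqrt p = 0) : ∀ p ∈ P, c p = 0 := by
  intro q hqP
  by_contra hc
  have hq := hP q hqP
  have hP' : ∀ p ∈ P.erase q, Nat.Prime p := fun p hp => hP p (Finset.mem_of_mem_erase hp)
  have hsum : (c q : ℝ) * Real.sqrt q + ∑ p ∈ P.erase q, (c p : ℝ) * Real.sqrt p = 0 := by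
    rw [Finset.add_sum_erase P (fun p => (c p : ℝ) * Real.sqrt p) hqP]; exact h
  have hcne : (c q : ℝ) ≠ 0 := Int.cast_ne_zero.2 hc
  have hmem : Real.sqrt q ∈ KK (P.erase q) := by
    have heq : Real.sqrt q
        = (-(∑ p ∈ P.erase q, (c p : ℝ) * Real.sqrt p)) / (c q) := by
      field_simp
      linarith [hsum]
    rw [heq]
    refine Subfield.div_mem _ (Subfield.neg_mem _ ?_) (intCast_mem _ _)
    exact Subfield.sum_mem _ fun p hp =>
      Subfield.mul_mem _ (intCast_mem _ _) (sqrt_mem_KK hp)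
  exact sqrt_not_mem_KK (P.erase q) hP' q hq.squarefree q hq dvd_rfl
    (Finset.notMem_erase q P) hmem

/-- If `S` and `T` are finite multisets of prime numbers such that
`Σ_{p ∈ S} √p = Σ_{p ∈ T} √p` (with multiplicity), then `S = T`. -/
theorem multiset_primes_sqrt_sum_inj (S T : Multiset ℕ)
    (hS : ∀ p ∈ S, Nat.Prime p) (hT : ∀ p ∈ T, Nat.Prime p)
    (h : (S.map fun p => Real.sqrt p).sum = (T.map fun p => Real.sqrt p).sum) :
    S = T := by
  classical
  set P : Finset ℕ := (S + T).toFinset with hPdef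
  have hP : ∀ p ∈ P, Nat.Prime p := by
    intro p hp
    rw [hPdef, Multiset.mem_toFinset, Multiset.mem_add] at hp
    exact hp.elim (hS p) (hT p)
  set f : ℕ → ℝ := fun n => Real.sqrt (n : ℝ) with hfdef
  have h' : (S.map f).sum = (T.map f).sum := by
    simpa [Multiset.map_map, Function.comp, hfdef] using h
  have hsub : ∀ (U : Multiset ℕ), U ≤ S + T →
      (U.map f).sum = ∑ p ∈ P, (U.count p : ℝ) * f p := by
    intro U hU
    rw [Finset.sum_multiset_map_count]
    have hsubset : U.toFinset ⊆ P := fun x hx =>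
      Multiset.mem_toFinset.2 (Multiset.mem_of_le hU (Multiset.mem_toFinset.1 hx))
    rw [Finset.sum_subset hsubset
      (fun p _ hp => by
        rw [Multiset.count_eq_zero_of_notMem (by simpa using hp), zero_smul])]
    exact Finset.sum_congr rfl fun p _ => by rw [nsmul_eq_mul]
  have hzero : ∑ p ∈ P, (((S.count p : ℤ) - T.count p : ℤ) : ℝ) * f p = 0 := by
    have hs := hsub S (Multiset.le_add_right S T)
    have ht := hsub T (Multiset.le_add_left T S)
    rw [hs, ht] at h'
    have key : ∑ p ∈ P, ((S.count p : ℝ) * f p - (T.count p : ℝ) * f p) = 0 := by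
      rw [Finset.sum_sub_distrib, h', sub_self]
    rw [← key]
    refine Finset.sum_congr rfl fun p _ => ?_
    push_cast
    ring
  have hcount := sqrt_primes_linIndep P hP (fun p => (S.count p : ℤ) - T.count p) hzero
  ext a
  by_cases ha : a ∈ P
  · have h0 : (S.count a : ℤ) - T.count a = 0 := hcount a ha
    omega
  · rw [hPdef, Multiset.mem_toFinset, Multiset.mem_add] at ha
    push_neg at ha
    rw [Multiset.count_eq_zero_of_notMem ha.1, Multiset.count_eq_zero_of_notMem ha.2]
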